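/- arXiv:2605.12268 — 8 statements merged into one kernel-verified Lean document; each statement's English description precedes it below -/
import Mathlib

section
/- Over the rationals, the quadratic form with Gram matrix A_d orthogonally summed with the rank-one form ⟨d+1⟩ is isometric to the (d+1)-fold orthogonal sum of ⟨1⟩, i.e. A_d ⊥ ⟨d+1⟩ ≃ (d+1)·⟨1⟩. -/
/-- `A d` is the `d × d` matrix with `2`'s on the diagonal and `1`'s off the diagonal. -/
def simplexGram (d : ℕ) : Matrix (Fin d) (Fin d) ℚ :=
  Matrix.of fun i j => if i = j then 2 else 1

/-- Over `ℚ`, `A_d ⊥ ⟨d+1⟩ ≃ (d+1)·⟨1⟩`, expressed as a congruence of Gram matrices. -/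
theorem simplexGram_perp_rankOne (d : ℕ) :
    ∃ P : Matrix (Fin d ⊕ Fin 1) (Fin d ⊕ Fin 1) ℚ, IsUnit P.det ∧
      P.transpose *
        Matrix.fromBlocks (simplexGram d) 0 0 (Matrix.of fun _ _ => ((d : ℚ) + 1)) * P =
      1 := by
  set Q : Matrix (Fin d ⊕ Fin 1) (Fin d ⊕ Fin 1) ℚ :=
    Matrix.fromBlocks 1 (Matrix.of fun _ _ => 1) (Matrix.of fun _ _ => -1) 1 with hQdef
  set M : Matrix (Fin d ⊕ Fin 1) (Fin d ⊕ Fin 1) ℚ :=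
    Matrix.fromBlocks (simplexGram d) 0 0 (Matrix.of fun _ _ => ((d : ℚ) + 1)) with hMdef
  have hQM : Q * Q.transpose = M := by
    rw [hQdef, hMdef]
    ext i j
    rcases i with i | i <;> rcases j with j | j <;>
      simp [Matrix.mul_apply, Fintype.sum_sum_type, simplexGram, Matrix.one_apply,
        Matrix.fromBlocks, Finset.sum_ite_eq, Finset.sum_ite_eq', Fin.eq_zero]
    split <;> ring
  have hdet : Q.det = (d : ℚ) + 1 := by
    rw [hQdef, Matrix.det_fromBlocks_one₁₁, Matrix.det_fin_one]
    simp [Matrix.mul_apply, Matrix.one_apply]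
    ring
  have hdu : IsUnit Q.det := by
    rw [hdet]
    exact isUnit_iff_ne_zero.mpr (by positivity)
  haveI : Invertible Q := Q.invertibleOfIsUnitDet hdu
  haveI : Invertible Q.transpose := Q.transpose.invertibleOfIsUnitDet
    (by rwa [Matrix.det_transpose])
  refine ⟨Q.transpose⁻¹, ?_, ?_⟩
  · rw [Matrix.det_nonsing_inv, Matrix.det_transpose, hdet, Ring.inverse_eq_inv']
    exact isUnit_iff_ne_zero.mpr (inv_ne_zero (show ((d:ℚ)+1) ≠ 0 by positivity))
  · rw [Matrix.transpose_nonsing_inv, Matrix.transpose_transpose, ← hQM]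
    rw [Matrix.mul_assoc, Matrix.mul_assoc, Matrix.mul_nonsing_inv _ (by
      rwa [Matrix.det_transpose]), Matrix.mul_one, Matrix.nonsing_inv_mul _ hdu]
end

section
/- Let 1 ≤ d ≤ n, let m ∈ ℚ_{>0}, and set a = m/2. There exist affinely independent points v₀,…,v_d ∈ ℚⁿ with all pairwise squared Euclidean distances equal to m if and only if there exists a positive definite rational quadratic form r of rank n−d (the zero-dimensional form if n = d) such that aA_d ⊥ r ≃ n·⟨1⟩ over ℚ. -/
/-- A regular `d`-simplex in `ℚⁿ` of squared edge length `m`. -/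
def IsRegularSimplex (d n : ℕ) (m : ℚ) (v : Fin (d + 1) → Fin n → ℚ) : Prop :=
  AffineIndependent ℚ v ∧ ∀ i j, i ≠ j → ∑ k, (v i k - v j k) ^ 2 = m

set_option linter.unusedSectionVars false
set_option linter.unusedVariables false

open Matrix

section Helpers

variable {k : Type*} [Fintype k] [DecidableEq k]

private lemma sum_sq_pos {y : k → ℚ} (hy : y ≠ 0) : 0 < ∑ i, y i ^ 2 := by
  obtain ⟨i, hi⟩ := Function.ne_iff.mp hy
  refine Finset.sum_pos' (fun j _ => sq_nonneg _) ⟨i, Finset.mem_univ _, ?_⟩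
  have : y i ≠ 0 := hi
  positivity

private lemma posdef_congruence {M T : Matrix k k ℚ} (hM : M.PosDef) (hT : IsUnit T) :
    (Tᵀ * M * T).PosDef := by
  have hMt : Mᵀ = M := by
    rw [← conjTranspose_eq_transpose_of_trivial]; exact hM.1
  refine Matrix.PosDef.of_dotProduct_mulVec_pos ?_ ?_
  · show _ᴴ = _
    rw [conjTranspose_eq_transpose_of_trivial]
    simp [Matrix.transpose_mul, hMt, Matrix.mul_assoc]
  · intro x hx
    have hTx : T *ᵥ x ≠ 0 := by
      intro h
      exact hx (mulVec_injective_iff_isUnit.mpr hT (by rw [h, Matrix.mulVec_zero] : T *ᵥ x = T *ᵥ 0))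
    have := hM.dotProduct_mulVec_pos (x := T *ᵥ x) hTx
    simpa [star_trivial, ← Matrix.mulVec_mulVec, Matrix.dotProduct_mulVec,
      Matrix.vecMul_transpose] using this

private lemma elim_zero_ne {d e : Type*} {x : e → ℚ} (hx : x ≠ 0) :
    (Sum.elim (0 : d → ℚ) x) ≠ 0 := by
  intro h
  apply hx
  funext i
  exact congrFun h (Sum.inr i)

private lemma zero_elim_ne {d e : Type*} {x : d → ℚ} (hx : x ≠ 0) :
    (Sum.elim x (0 : e → ℚ)) ≠ 0 := by
  intro h
  apply hx
  funext i
  exact congrFun h (Sum.inl i)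

private lemma posdef_toBlocks₁₁ {d' e' : Type*} [Fintype d'] [DecidableEq d']
    [Fintype e'] [DecidableEq e'] {A : Matrix d' d' ℚ} {B : Matrix d' e' ℚ}
    {C : Matrix e' d' ℚ} {D : Matrix e' e' ℚ}
    (h : (Matrix.fromBlocks A B C D).PosDef) : A.PosDef := by
  refine Matrix.PosDef.of_dotProduct_mulVec_pos ?_ ?_
  · have h1 := h.1
    rw [IsHermitian, conjTranspose_eq_transpose_of_trivial, fromBlocks_transpose] at h1
    have := congrArg Matrix.toBlocks₁₁ h1
    rw [IsHermitian, conjTranspose_eq_transpose_of_trivial]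
    exact (by simpa [Matrix.toBlocks₁₁] using this : (fun i j => A j i) = fun i j => A i j)
  · intro x hx
    have := h.dotProduct_mulVec_pos (x := Sum.elim x 0) (zero_elim_ne hx)
    simpa [star_trivial, Matrix.fromBlocks_mulVec, dotProduct,
      Fintype.sum_sum_type] using this

private lemma posdef_toBlocks₂₂ {d' e' : Type*} [Fintype d'] [DecidableEq d']
    [Fintype e'] [DecidableEq e'] {A : Matrix d' d' ℚ} {B : Matrix d' e' ℚ}
    {C : Matrix e' d' ℚ} {D : Matrix e' e' ℚ}
    (h : (Matrix.fromBlocks A B C D).PosDef) : D.PosDef := by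
  refine Matrix.PosDef.of_dotProduct_mulVec_pos ?_ ?_
  · have h1 := h.1
    rw [IsHermitian, conjTranspose_eq_transpose_of_trivial, fromBlocks_transpose] at h1
    have := congrArg Matrix.toBlocks₂₂ h1
    rw [IsHermitian, conjTranspose_eq_transpose_of_trivial]
    exact (by simpa [Matrix.toBlocks₂₂] using this : (fun i j => D j i) = fun i j => D i j)
  · intro x hx
    have := h.dotProduct_mulVec_pos (x := Sum.elim 0 x) (elim_zero_ne hx)
    simpa [star_trivial, Matrix.fromBlocks_mulVec, dotProduct,
      Fintype.sum_sum_type] using this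

private lemma sum_sub_sq {N : ℕ} (a b : Fin N → ℚ) :
    ∑ kk, (a kk - b kk) ^ 2 =
      (∑ kk, a kk * a kk) + (∑ kk, b kk * b kk) - 2 * ∑ kk, a kk * b kk := by
  rw [← Finset.sum_add_distrib, Finset.mul_sum, ← Finset.sum_sub_distrib]
  exact Finset.sum_congr rfl fun kk _ => by ring

end Helpers

/-- Reduction: `m ∈ S_ℚ(d,n)` iff there is a positive definite complement `r` of rank
`n - d` with `(m/2)·A_d ⊥ r ≃ n·⟨1⟩`. -/
theorem simplex_iff_complement (d n : ℕ) (hd : 1 ≤ d) (hdn : d ≤ n) (m : ℚ) (hm : 0 < m) :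
    (∃ v : Fin (d + 1) → Fin n → ℚ, IsRegularSimplex d n m v) ↔
      ∃ r : Matrix (Fin (n - d)) (Fin (n - d)) ℚ, r.PosDef ∧
        ∃ P : Matrix (Fin d ⊕ Fin (n - d)) (Fin d ⊕ Fin (n - d)) ℚ, IsUnit P.det ∧
          P.transpose * Matrix.fromBlocks ((m / 2) • simplexGram d) 0 0 r * P = 1 := by
  have e : (Fin d ⊕ Fin (n - d)) ≃ Fin n :=
    finSumFinEquiv.trans (finCongr (Nat.add_sub_cancel' hdn))
  constructor
  · rintro ⟨v, hvai, hvd⟩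
    set u : Fin d → Fin n → ℚ := fun i => v i.succ - v 0 with hudef
    have huli : LinearIndependent ℚ u := by
      have h1 := (affineIndependent_iff_linearIndependent_vsub ℚ v 0).mp hvai
      exact h1.comp
        (fun i : Fin d => (⟨i.succ, Fin.succ_ne_zero i⟩ : {x : Fin (d + 1) // x ≠ 0}))
        (fun i j h => by simpa [Fin.succ_inj] using congrArg Subtype.val h)
    have hnorm : ∀ i, (∑ kk, u i kk * u i kk) = m := by
      intro i
      have h1 := hvd i.succ 0 (Fin.succ_ne_zero i)
      rw [← h1]
      exact Finset.sum_congr rfl fun kk _ => by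
        simp only [hudef, Pi.sub_apply]; ring
    have hudot : ∀ i j, (∑ kk, u i kk * u j kk) = (m / 2) * (if i = j then 2 else 1) := by
      intro i j
      by_cases h : i = j
      · subst h
        rw [if_pos rfl, hnorm i]; ring
      · rw [if_neg h, mul_one]
        have h1 : (∑ kk, (u i kk - u j kk) ^ 2) = m := by
          have h2 := hvd i.succ j.succ (fun hh => h (Fin.succ_inj.mp hh))
          rw [← h2]
          exact Finset.sum_congr rfl fun kk _ => by
            simp only [hudef, Pi.sub_apply]; ring
        have h3 := sum_sub_sq (u i) (u j)
        rw [h1, hnorm i, hnorm j] at h3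
        linarith
    obtain ⟨t, ht⟩ := Submodule.exists_isCompl (Submodule.span ℚ (Set.range u))
    have hfr : Module.finrank ℚ t = n - d := by
      have h1 : Module.finrank ℚ (Submodule.span ℚ (Set.range u)) = d := by
        rw [finrank_span_eq_card huli, Fintype.card_fin]
      have h2 := Submodule.finrank_add_eq_of_isCompl ht
      rw [h1, Module.finrank_fin_fun] at h2
      omega
    set b := Module.finBasisOfFinrankEq ℚ t hfr with hbdef
    set w : Fin (n - d) → Fin n → ℚ := fun j => (b j : Fin n → ℚ) with hwdef
    have hwli : LinearIndependent ℚ w := by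
      have := b.linearIndependent.map' t.subtype (Submodule.ker_subtype t)
      exact this
    have hzli : LinearIndependent ℚ (Sum.elim u w) := by
      refine huli.sum_type hwli ?_
      refine Disjoint.mono_right ?_ ht.disjoint
      rw [Submodule.span_le]
      rintro x ⟨j, rfl⟩
      exact (b j).2
    set V : Matrix (Fin d ⊕ Fin (n - d)) (Fin d ⊕ Fin (n - d)) ℚ :=
      Matrix.of fun kk c => Sum.elim u w c (e kk) with hVdef
    have hVunit : IsUnit V := by
      rw [← linearIndependent_cols_iff_isUnit]
      have h1 := hzli.map' (LinearEquiv.funCongrLeft ℚ ℚ e).toLinearMap (LinearEquiv.ker _)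
      exact h1
    set M := Vᵀ * V with hMdef
    have hMdot : ∀ c c', M c c' = ∑ kk : Fin n, Sum.elim u w c kk * Sum.elim u w c' kk := by
      intro c c'
      rw [hMdef, Matrix.mul_apply]
      simp only [Matrix.transpose_apply, hVdef, Matrix.of_apply]
      exact Equiv.sum_comp e (fun kk => Sum.elim u w c kk * Sum.elim u w c' kk)
    have hMpd : M.PosDef := by
      have h1 : (Vᵀ * 1 * V).PosDef := posdef_congruence Matrix.PosDef.one hVunit
      simpa using h1
    have hMsym : Mᵀ = M := by
      rw [← conjTranspose_eq_transpose_of_trivial]; exact hMpd.1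
    set G₁ : Matrix (Fin d) (Fin d) ℚ := (m / 2) • simplexGram d with hG₁def
    have hM11 : ∀ i j, M (Sum.inl i) (Sum.inl j) = G₁ i j := by
      intro i j
      rw [hMdot]
      simp only [Sum.elim_inl]
      rw [hudot]
      simp [hG₁def, simplexGram]
    set B : Matrix (Fin d) (Fin (n - d)) ℚ :=
      Matrix.of fun i j => M (Sum.inl i) (Sum.inr j) with hBdef
    set D : Matrix (Fin (n - d)) (Fin (n - d)) ℚ :=
      Matrix.of fun i j => M (Sum.inr i) (Sum.inr j) with hDdef
    have hMblocks : M = Matrix.fromBlocks G₁ B Bᵀ D := by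
      ext c c'
      rcases c with i | i <;> rcases c' with j | j
      · simpa using hM11 i j
      · simp [hBdef]
      · show M (Sum.inr i) (Sum.inl j) = Bᵀ i j
        calc M (Sum.inr i) (Sum.inl j) = Mᵀ (Sum.inl j) (Sum.inr i) := rfl
          _ = M (Sum.inl j) (Sum.inr i) := by rw [hMsym]
          _ = Bᵀ i j := rfl
      · simp [hDdef]
    have hG₁pd : G₁.PosDef := posdef_toBlocks₁₁ (hMblocks ▸ hMpd)
    have hG₁det : IsUnit G₁.det := by
      have hinj : Function.Injective G₁.mulVec := by
        intro x y hxy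
        by_contra hne
        have h0 : G₁ *ᵥ (x - y) = 0 := by
          rw [Matrix.mulVec_sub, hxy, sub_self]
        have := hG₁pd.dotProduct_mulVec_pos (x := x - y) (sub_ne_zero.mpr hne)
        rw [h0] at this
        simp at this
      exact (Matrix.isUnit_iff_isUnit_det _).mp (mulVec_injective_iff_isUnit.mp hinj)
    have hG₁sym : G₁ᵀ = G₁ := by
      rw [← conjTranspose_eq_transpose_of_trivial]; exact hG₁pd.1
    have hGit : (G₁⁻¹)ᵀ = G₁⁻¹ := by
      rw [Matrix.transpose_nonsing_inv, hG₁sym]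
    set T : Matrix (Fin d ⊕ Fin (n - d)) (Fin d ⊕ Fin (n - d)) ℚ :=
      Matrix.fromBlocks 1 (-(G₁⁻¹ * B)) 0 1 with hTdef
    have hTunit : IsUnit T := by
      rw [Matrix.isUnit_iff_isUnit_det, hTdef, Matrix.det_fromBlocks_zero₂₁]
      simp
    set r0 : Matrix (Fin (n - d)) (Fin (n - d)) ℚ := D - Bᵀ * G₁⁻¹ * B with hr0def
    have hcan1 : ∀ X : Matrix (Fin d) (Fin (n - d)) ℚ, G₁⁻¹ * (G₁ * X) = X := by
      intro X
      rw [← Matrix.mul_assoc, Matrix.nonsing_inv_mul _ hG₁det, Matrix.one_mul]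
    have hcan2 : ∀ X : Matrix (Fin d) (Fin (n - d)) ℚ, G₁ * (G₁⁻¹ * X) = X := by
      intro X
      rw [← Matrix.mul_assoc, Matrix.mul_nonsing_inv _ hG₁det, Matrix.one_mul]
    have hTMT : Tᵀ * M * T = Matrix.fromBlocks G₁ 0 0 r0 := by
      rw [hMblocks, hTdef, Matrix.fromBlocks_transpose, Matrix.fromBlocks_multiply,
        Matrix.fromBlocks_multiply]
      simp only [Matrix.transpose_one, Matrix.transpose_zero, Matrix.transpose_neg,
        Matrix.transpose_mul, hGit, Matrix.one_mul, Matrix.mul_one, Matrix.zero_mul,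
        Matrix.mul_zero, add_zero, zero_add, Matrix.neg_mul, Matrix.mul_neg, neg_neg,
        Matrix.mul_assoc, Matrix.nonsing_inv_mul _ hG₁det, hcan1, hcan2, neg_add_cancel,
        Matrix.zero_mul, zero_add]
      rw [hr0def, Matrix.mul_assoc]
      abel_nf
    have h0 : (V * T)ᵀ * (V * T) = Matrix.fromBlocks G₁ 0 0 r0 := by
      rw [Matrix.transpose_mul, ← hTMT, hMdef]
      simp only [Matrix.mul_assoc]
    have hVTdet : IsUnit (V * T).det := (Matrix.isUnit_iff_isUnit_det _).mp (hVunit.mul hTunit)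
    refine ⟨r0, posdef_toBlocks₂₂ (hTMT ▸ posdef_congruence hMpd hTunit), (V * T)⁻¹,
      Matrix.isUnit_nonsing_inv_det _ hVTdet, ?_⟩
    rw [← h0]
    have h1 : (V * T) * (V * T)⁻¹ = 1 := Matrix.mul_nonsing_inv _ hVTdet
    calc ((V * T)⁻¹)ᵀ * ((V * T)ᵀ * (V * T)) * (V * T)⁻¹
        = ((V * T) * (V * T)⁻¹)ᵀ * ((V * T) * (V * T)⁻¹) := by
          simp only [Matrix.transpose_mul, Matrix.mul_assoc]
      _ = 1 := by rw [h1]; simp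
  · rintro ⟨r, hr, P, hP, hPG⟩
    set G : Matrix (Fin d ⊕ Fin (n - d)) (Fin d ⊕ Fin (n - d)) ℚ :=
      Matrix.fromBlocks ((m / 2) • simplexGram d) 0 0 r with hGdef
    set W := P⁻¹ with hWdef
    have hPW : P * W = 1 := Matrix.mul_nonsing_inv P hP
    have hWG : Wᵀ * W = G := by
      calc Wᵀ * W = Wᵀ * (Pᵀ * G * P) * W := by rw [hPG, Matrix.mul_one]
        _ = (P * W)ᵀ * G * (P * W) := by
            rw [Matrix.transpose_mul]; simp only [Matrix.mul_assoc]
        _ = G := by rw [hPW]; simp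
    have hWunit : IsUnit W := Matrix.isUnit_nonsing_inv_iff.mpr ((Matrix.isUnit_iff_isUnit_det P).mpr hP)
    have hcol : ∀ c c' : Fin d ⊕ Fin (n - d), (∑ l, W l c * W l c') = G c c' := by
      intro c c'
      rw [← hWG]
      simp [Matrix.mul_apply]
    set u : Fin d → Fin n → ℚ := fun i kk => W (e.symm kk) (Sum.inl i) with hudef
    have hudot : ∀ i j, (∑ kk, u i kk * u j kk) = (m / 2) * (if i = j then 2 else 1) := by
      intro i j
      calc (∑ kk, u i kk * u j kk)
          = ∑ l, W l (Sum.inl i) * W l (Sum.inl j) :=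
            Equiv.sum_comp e.symm (fun l => W l (Sum.inl i) * W l (Sum.inl j))
        _ = G (Sum.inl i) (Sum.inl j) := hcol _ _
        _ = (m / 2) * (if i = j then 2 else 1) := by
            simp [hGdef, simplexGram]
    have huli : LinearIndependent ℚ u := by
      have h1 : LinearIndependent ℚ (fun c => Wᵀ c) :=
        linearIndependent_cols_iff_isUnit.mpr hWunit
      have h2 : LinearIndependent ℚ (fun i : Fin d => Wᵀ (Sum.inl i)) :=
        h1.comp Sum.inl Sum.inl_injective
      have h3 := h2.map' (LinearEquiv.funCongrLeft ℚ ℚ e.symm).toLinearMap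
        (LinearEquiv.ker _)
      exact h3
    set v : Fin (d + 1) → Fin n → ℚ :=
      fun i => if h : i = 0 then 0 else u (i.pred h) with hvdef
    refine ⟨v, ?_, ?_⟩
    · rw [affineIndependent_iff_linearIndependent_vsub ℚ v 0]
      have hfun : (fun i : {x : Fin (d + 1) // x ≠ 0} => (v i -ᵥ v 0 : Fin n → ℚ)) =
          fun i => u (i.1.pred i.2) := by
        funext i
        show v i.1 - v 0 = u (i.1.pred i.2)
        simp [hvdef, i.2]
      rw [hfun]
      exact huli.comp _ (fun i j h => Subtype.ext (Fin.pred_inj.mp h))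
    · intro i j hij
      by_cases hi : i = 0
      · subst hi
        have hj : j ≠ 0 := fun h => hij h.symm
        have h1 : ∀ kk, (v 0 kk - v j kk) ^ 2 = u (j.pred hj) kk * u (j.pred hj) kk := by
          intro kk
          simp only [hvdef, dif_pos rfl, dif_neg hj, Pi.zero_apply]
          ring
        rw [Finset.sum_congr rfl fun kk _ => h1 kk, hudot, if_pos rfl]
        ring
      · by_cases hj : j = 0
        · subst hj
          have h1 : ∀ kk, (v i kk - v 0 kk) ^ 2 = u (i.pred hi) kk * u (i.pred hi) kk := by
            intro kk
            simp only [hvdef, dif_pos rfl, dif_neg hi, Pi.zero_apply]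
            ring
          rw [Finset.sum_congr rfl fun kk _ => h1 kk, hudot, if_pos rfl]
          ring
        · have hpred : i.pred hi ≠ j.pred hj := by
            intro h
            exact hij (Fin.pred_inj.mp h)
          have h1 : ∀ kk, v i kk = u (i.pred hi) kk := fun kk => by
            simp [hvdef, dif_neg hi]
          have h2 : ∀ kk, v j kk = u (j.pred hj) kk := fun kk => by
            simp [hvdef, dif_neg hj]
          have h3 : (∑ kk, (v i kk - v j kk) ^ 2) =
              ∑ kk, (u (i.pred hi) kk - u (j.pred hj) kk) ^ 2 :=
            Finset.sum_congr rfl fun kk _ => by rw [h1, h2]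
          rw [h3, sum_sub_sq, hudot, hudot, hudot, if_pos rfl, if_pos rfl, if_neg hpred]
          ring
end

section
/- If d ≡ 2 (mod 4), then there is no regular d-simplex with vertices in ℚ^d; equivalently, for no m ∈ ℚ_{>0} do there exist d+1 points in ℚ^d with all pairwise squared distances equal to m. -/
open Matrix in
lemma aux_det (d : ℕ) (m : ℚ) (M : Matrix (Fin d) (Fin d) ℚ)
    (h : M * Mᵀ = (m/2) • (1 + Matrix.replicateCol Unit (fun _ : Fin d => (1:ℚ)) * Matrix.replicateRow Unit (fun _ : Fin d => (1:ℚ)))) :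
    (M.det)^2 = (m/2)^d * (d+1) := by
  have h1 : det (1 + Matrix.replicateCol Unit (fun _ : Fin d => (1:ℚ)) * Matrix.replicateRow Unit (fun _ : Fin d => (1:ℚ))) = (d : ℚ) + 1 := by
    rw [det_one_add_replicateCol_mul_replicateRow]
    simp [dotProduct]
    ring
  have h2 := congrArg det h
  rw [det_mul, det_transpose, det_smul, h1] at h2
  rw [← sq] at h2
  rw [h2, Fintype.card_fin]

lemma aux_nat_square (d : ℕ) (t : ℚ) (h : t ^ 2 = (d : ℚ) + 1) : ∃ n : ℕ, n ^ 2 = d + 1 := by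
  have hden : t.den = 1 := by
    have : (t ^ 2).den = 1 := by
      rw [h]
      have : ((d : ℚ) + 1) = ((d + 1 : ℕ) : ℚ) := by push_cast; ring
      rw [this, Rat.den_natCast]
    rw [Rat.den_pow] at this
    nlinarith [t.den_pos]
  have hnum : t.num ^ 2 = (d : ℤ) + 1 := by
    have h2 : (t ^ 2).num = ((d + 1 : ℕ) : ℚ).num := by
      congr 1; rw [h]; push_cast; ring
    rw [Rat.num_pow, Rat.num_natCast] at h2
    push_cast at h2 ⊢; linarith
  refine ⟨t.num.natAbs, ?_⟩
  have := congrArg Int.natAbs hnum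
  rw [Int.natAbs_pow] at this
  omega

open Matrix in
/-- If `d ≡ 2 (mod 4)`, there is no regular `d`-simplex with vertices in `ℚ^d`. -/
theorem no_simplex_codim_zero_two_mod_four (d : ℕ) (hd : d % 4 = 2) :
    ¬ ∃ (m : ℚ) (v : Fin (d + 1) → Fin d → ℚ), 0 < m ∧ IsRegularSimplex d d m v := by
  rintro ⟨m, v, hm, -, hdist⟩
  set u : Fin d → Fin d → ℚ := fun i k => v i.succ k - v 0 k with hu
  have hnorm : ∀ i : Fin d, ∑ k, u i k ^ 2 = m := fun i => hdist i.succ 0 (Fin.succ_ne_zero i)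
  have hcross : ∀ i j : Fin d, i ≠ j → ∑ k, (u i k - u j k) ^ 2 = m := by
    intro i j hij
    have e : ∀ k, u i k - u j k = v i.succ k - v j.succ k := by intro k; simp [hu]
    simp_rw [e]
    exact hdist i.succ j.succ (fun hs => hij (Fin.succ_injective _ hs))
  have hinner : ∀ i j : Fin d, ∑ k, u i k * u j k = if i = j then m else m / 2 := by
    intro i j
    by_cases hij : i = j
    · subst hij; rw [if_pos rfl]
      simpa [sq] using hnorm i
    · rw [if_neg hij]
      have e : ∀ k, u i k * u j k = (u i k ^ 2 + u j k ^ 2 - (u i k - u j k) ^ 2) / 2 := by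
        intro k; ring
      calc ∑ k, u i k * u j k
          = ((∑ k, u i k ^ 2) + (∑ k, u j k ^ 2) - ∑ k, (u i k - u j k) ^ 2) / 2 := by
            simp_rw [e]
            rw [← Finset.sum_div, Finset.sum_sub_distrib, Finset.sum_add_distrib]
        _ = m / 2 := by rw [hnorm i, hnorm j, hcross i j hij]; ring
  set M : Matrix (Fin d) (Fin d) ℚ := Matrix.of u with hM
  have hMM : M * Mᵀ = (m / 2) • (1 + Matrix.replicateCol Unit (fun _ : Fin d => (1:ℚ)) *
      Matrix.replicateRow Unit (fun _ : Fin d => (1:ℚ))) := by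
    ext i j
    rw [Matrix.mul_apply]
    simp only [Matrix.transpose_apply, Matrix.smul_apply, Matrix.add_apply, Matrix.one_apply,
      Matrix.mul_apply, Matrix.replicateCol_apply, Matrix.replicateRow_apply, hM, Matrix.of_apply,
      Finset.sum_const, Finset.card_univ, Fintype.card_unit, one_smul, smul_eq_mul]
    rw [hinner i j]
    split <;> ring
  have hdet := aux_det d m M hMM
  obtain ⟨c, hc⟩ : ∃ c, d = 2 * c := ⟨d / 2, by omega⟩
  have hm2 : (m / 2) ≠ 0 := by positivity
  have ht : (M.det / (m / 2) ^ c) ^ 2 = (d : ℚ) + 1 := by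
    rw [div_pow, hdet, hc, pow_mul']
    field_simp
  obtain ⟨n, hn⟩ := aux_nat_square d _ ht
  rcases Nat.even_or_odd n with ⟨k, hk⟩ | ⟨k, hk⟩ <;> subst hk
  · have : (k + k) ^ 2 = 4 * (k * k) := by ring
    omega
  · have : (2 * k + 1) ^ 2 = 4 * (k * k + k) + 1 := by ring
    omega
end

section
/- There is no regular 4-simplex with vertices in ℚ⁴: no five points of ℚ⁴ are pairwise equidistant (with respect to Euclidean distance) and affinely independent. -/
lemma no_rat_sqrt_five (q : ℚ) : q ^ 2 ≠ 5 := by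
  intro h
  have h5 : Irrational (Real.sqrt 5) := by
    simpa using (by norm_num : Nat.Prime 5).irrational_sqrt
  apply h5
  refine ⟨|q|, ?_⟩
  have : ((q : ℝ)) ^ 2 = 5 := by exact_mod_cast congrArg (Rat.cast : ℚ → ℝ) h
  rw [← this, Real.sqrt_sq_eq_abs]
  push_cast
  ring

/-- There is no regular `4`-simplex with vertices in `ℚ⁴`. -/
theorem no_regular_four_simplex_in_Q4 :
    ¬ ∃ (v : Fin 5 → Fin 4 → ℚ) (m : ℚ),
        AffineIndependent ℚ v ∧ ∀ i j, i ≠ j → ∑ k, (v i k - v j k) ^ 2 = m := by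
  rintro ⟨v, m, haff, hdist⟩
  -- m ≠ 0
  have hm : m ≠ 0 := by
    intro hm0
    have h01 := hdist 0 1 (by decide)
    rw [hm0] at h01
    have hz : ∀ k, (v 0 k - v 1 k) ^ 2 = 0 := by
      intro k
      have := (Finset.sum_eq_zero_iff_of_nonneg
        (fun k _ => sq_nonneg (v 0 k - v 1 k))).mp h01
      exact this k (Finset.mem_univ k)
    have : v 0 = v 1 := by
      funext k
      have := hz k
      have := pow_eq_zero_iff (n := 2) (by norm_num) |>.mp this
      linarith [this]
    exact (by decide : (0 : Fin 5) ≠ 1) (haff.injective this)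
  set W : Matrix (Fin 4) (Fin 4) ℚ :=
    Matrix.of fun k i => v i.succ k - v 0 k with hW
  have hGram : W.transpose * W = Matrix.of fun i j : Fin 4 => if i = j then m else m / 2 := by
    funext i j
    simp only [Matrix.mul_apply, Matrix.transpose_apply, Matrix.of_apply, hW]
    by_cases hij : i = j
    · subst hij
      rw [if_pos rfl]
      have h := hdist i.succ 0 (Fin.succ_ne_zero i)
      rw [← h]
      exact Finset.sum_congr rfl fun k _ => by ring
    · rw [if_neg hij]
      have h1 := hdist i.succ 0 (Fin.succ_ne_zero i)
      have h2 := hdist j.succ 0 (Fin.succ_ne_zero j)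
      have h3 := hdist i.succ j.succ (fun h => hij (Fin.succ_injective _ h))
      have key : (2 : ℚ) * ∑ k, (v i.succ k - v 0 k) * (v j.succ k - v 0 k)
          = (∑ k, (v i.succ k - v 0 k) ^ 2) + (∑ k, (v j.succ k - v 0 k) ^ 2)
            - ∑ k, (v i.succ k - v j.succ k) ^ 2 := by
        rw [Finset.mul_sum, ← Finset.sum_add_distrib, ← Finset.sum_sub_distrib]
        exact Finset.sum_congr rfl fun k _ => by ring
      rw [h1, h2, h3] at key
      linarith
  have hdetG : (Matrix.of fun i j : Fin 4 => if i = j then m else m / 2).det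
      = 5 * (m / 2) ^ 4 := by
    simp [Matrix.det_succ_row_zero, Fin.sum_univ_succ, Matrix.of_apply, Fin.succAbove]
    ring
  have hsq : W.det ^ 2 = 5 * (m / 2) ^ 4 := by
    have := congrArg Matrix.det hGram
    rwa [Matrix.det_mul, Matrix.det_transpose, ← sq, hdetG] at this
  have hq : (W.det / (m / 2) ^ 2) ^ 2 = 5 := by
    have hm2 : ((m / 2) ^ 2) ≠ 0 := by
      intro h; exact hm (by
        have := pow_eq_zero_iff (n := 2) (by norm_num) |>.mp h
        field_simp at this; linarith)
    field_simp
    linarith [hsq]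
  exact no_rat_sqrt_five _ hq
end

section
/- If d ≡ 3 (mod 4) and s = sf(d+1) is the squarefree part of d+1, then the set of squared edge lengths of regular d-simplices with vertices in ℚ^d is exactly the square class 2s(ℚ^×)²: m occurs if and only if m = 2s q² for some q ∈ ℚ^×. -/
open Matrix Finset

section Helpers

private lemma sum_sub_sq' {n : ℕ} (x y : Fin n → ℚ) :
    ∑ i, (x i - y i) ^ 2 = x ⬝ᵥ x + y ⬝ᵥ y - 2 * (x ⬝ᵥ y) := by
  simp only [dotProduct, ← Finset.sum_add_distrib, ← Finset.sum_sub_distrib, Finset.mul_sum]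
  exact Finset.sum_congr rfl fun i _ => by ring

private lemma dot_self_ne_zero' {n : ℕ} {x : Fin n → ℚ} (hx : x ≠ 0) : x ⬝ᵥ x ≠ 0 := by
  intro h
  apply hx
  funext i
  have hnn : ∀ j ∈ Finset.univ (α := Fin n), 0 ≤ x j * x j := fun j _ => mul_self_nonneg _
  exact mul_self_eq_zero.mp ((Finset.sum_eq_zero_iff_of_nonneg hnn).mp h i (Finset.mem_univ i))

private lemma quat' (a b c e : ℚ) : ∃ M : Matrix (Fin 4) (Fin 4) ℚ,
    ∀ r r', M r ⬝ᵥ M r' = if r = r' then a^2+b^2+c^2+e^2 else 0 := by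
  refine ⟨!![a,b,c,e; -b,a,-e,c; -c,e,a,-b; -e,-c,b,a], ?_⟩
  intro r r'
  fin_cases r <;> fin_cases r' <;>
    norm_num [dotProduct, Fin.sum_univ_four, Fin.ext_iff] <;> simp [Matrix.vecHead, Matrix.vecTail] <;> ring

private lemma blockB' (d : ℕ) (hd4 : (d + 1) % 4 = 0) :
    ∃ B : Matrix (Fin (d+1)) (Fin (d+1)) ℚ,
      ∀ i j, B i ⬝ᵥ B j = if i = j then ((d:ℚ)+1) else 0 := by
  obtain ⟨a, b, c, e, habce⟩ := Nat.sum_four_squares (d+1)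
  obtain ⟨M, hM⟩ := quat' a b c e
  have hN : ((a:ℚ)^2 + (b:ℚ)^2 + (c:ℚ)^2 + (e:ℚ)^2) = (d:ℚ)+1 := by
    exact_mod_cast congrArg (fun n : ℕ => (n : ℚ)) habce
  set k := (d+1)/4 with hkdef
  have hk : k * 4 = d + 1 := Nat.div_mul_cancel (Nat.dvd_of_mod_eq_zero hd4)
  let E : Fin k × Fin 4 ≃ Fin (d+1) := finProdFinEquiv.trans (finCongr hk)
  refine ⟨Matrix.of fun i j =>
      if (E.symm i).1 = (E.symm j).1 then M (E.symm i).2 (E.symm j).2 else 0, ?_⟩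
  intro i j
  rw [dotProduct, ← Equiv.sum_comp E]
  simp only [Matrix.of_apply, Equiv.symm_apply_apply]
  rw [Fintype.sum_prod_type]
  by_cases h1 : (E.symm i).1 = (E.symm j).1
  · have hterm : ∀ p1 p2, (if (E.symm i).1 = p1 then M (E.symm i).2 p2 else 0) *
        (if (E.symm j).1 = p1 then M (E.symm j).2 p2 else 0) =
        if (E.symm i).1 = p1 then M (E.symm i).2 p2 * M (E.symm j).2 p2 else 0 := by
      intro p1 p2; rw [← h1]; split <;> simp
    simp only [hterm]
    have hsum : ∀ p1, (∑ p2 : Fin 4,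
        if (E.symm i).1 = p1 then M (E.symm i).2 p2 * M (E.symm j).2 p2 else 0) =
        if (E.symm i).1 = p1 then (M (E.symm i).2 ⬝ᵥ M (E.symm j).2) else 0 := by
      intro p1; split <;> simp [dotProduct]
    rw [Finset.sum_congr rfl fun p1 _ => hsum p1]
    rw [Finset.sum_ite_eq univ (E.symm i).1
      (fun _ => M (E.symm i).2 ⬝ᵥ M (E.symm j).2), if_pos (Finset.mem_univ _), hM]
    have hij : (i = j) ↔ ((E.symm i).2 = (E.symm j).2) := by
      constructor
      · rintro rfl; rfl
      · intro h2; exact E.symm.injective (Prod.ext h1 h2)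
    by_cases h : i = j
    · rw [if_pos h, if_pos (hij.mp h), hN]
    · rw [if_neg h, if_neg (fun h2 => h (hij.mpr h2))]
  · have hij : i ≠ j := fun h => h1 (by rw [h])
    rw [if_neg hij]
    apply Finset.sum_eq_zero; intro p1 _
    apply Finset.sum_eq_zero; intro p2 _
    by_cases hA : (E.symm i).1 = p1 <;> by_cases hB : (E.symm j).1 = p1
    · exact absurd (hA.trans hB.symm) h1
    all_goals simp [hA, hB]

private lemma reflectB' {d : ℕ} {N : ℚ} {B : Matrix (Fin (d+1)) (Fin (d+1)) ℚ}
    (hB : ∀ i j, B i ⬝ᵥ B j = if i = j then N else 0)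
    {w : Fin (d+1) → ℚ} (hw : w ⬝ᵥ w = N) :
    ∃ A : Matrix (Fin (d+1)) (Fin (d+1)) ℚ,
      (∀ i j, A i ⬝ᵥ A j = if i = j then N else 0) ∧ A 0 = w := by
  by_cases hu : B 0 - w = 0
  · exact ⟨B, hB, sub_eq_zero.mp hu⟩
  · set u : Fin (d+1) → ℚ := B 0 - w with hudef
    have hU : u ⬝ᵥ u ≠ 0 := dot_self_ne_zero' hu
    refine ⟨(fun i => B i - ((2 * (B i ⬝ᵥ u)) / (u ⬝ᵥ u)) • u :
      Matrix (Fin (d+1)) (Fin (d+1)) ℚ), ?_, ?_⟩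
    · intro i j
      rw [← hB i j]
      show (B i - _ • u) ⬝ᵥ (B j - _ • u) = B i ⬝ᵥ B j
      simp only [sub_dotProduct, dotProduct_sub, smul_dotProduct,
        dotProduct_smul, smul_eq_mul]
      field_simp
      rw [dotProduct_comm (B 0 - w) (B j)]
      ring
    · have hb0u : B 0 ⬝ᵥ u = N - B 0 ⬝ᵥ w := by
        rw [hudef, dotProduct_sub, hB 0 0, if_pos rfl]
      have hUval : u ⬝ᵥ u = 2 * (N - B 0 ⬝ᵥ w) := by
        rw [hudef, sub_dotProduct, dotProduct_sub, dotProduct_sub, hB 0 0, if_pos rfl,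
          dotProduct_comm w (B 0), hw]
        ring
      have hne : N - B 0 ⬝ᵥ w ≠ 0 := by
        intro h; apply hU; rw [hUval, h, mul_zero]
      have hcoef : (2 * (B 0 ⬝ᵥ u)) / (u ⬝ᵥ u) = 1 := by
        rw [hb0u, hUval]; field_simp
      show B 0 - ((2 * (B 0 ⬝ᵥ u)) / (u ⬝ᵥ u)) • u = w
      rw [hcoef, one_smul, hudef, sub_sub_cancel]

private lemma gram' {d : ℕ} {m : ℚ} {v : Fin (d+1) → Fin d → ℚ}
    (hv : ∀ i j, i ≠ j → ∑ k, (v i k - v j k) ^ 2 = m) :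
    (Matrix.of fun i j : Fin d => v j.succ i - v 0 i)ᵀ *
      (Matrix.of fun i j : Fin d => v j.succ i - v 0 i) =
      Matrix.of fun i j : Fin d => if i = j then m else m / 2 := by
  ext j j'
  rw [Matrix.mul_apply]
  simp only [Matrix.transpose_apply, Matrix.of_apply]
  by_cases h : j = j'
  · subst h
    rw [if_pos rfl, ← hv j.succ 0 (Fin.succ_ne_zero j)]
    exact Finset.sum_congr rfl fun i _ => by ring
  · rw [if_neg h]
    have hxx : (fun i => v j.succ i - v 0 i) ⬝ᵥ (fun i => v j.succ i - v 0 i) = m := by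
      rw [← hv j.succ 0 (Fin.succ_ne_zero j), dotProduct]
      exact Finset.sum_congr rfl fun i _ => by ring
    have hyy : (fun i => v j'.succ i - v 0 i) ⬝ᵥ (fun i => v j'.succ i - v 0 i) = m := by
      rw [← hv j'.succ 0 (Fin.succ_ne_zero j'), dotProduct]
      exact Finset.sum_congr rfl fun i _ => by ring
    have hdd : ∑ i, ((v j.succ i - v 0 i) - (v j'.succ i - v 0 i)) ^ 2 = m := by
      rw [← hv j.succ j'.succ (fun hc => h (Fin.succ_injective _ hc))]
      exact Finset.sum_congr rfl fun i _ => by ring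
    have h1 := sum_sub_sq' (fun i => v j.succ i - v 0 i) (fun i => v j'.succ i - v 0 i)
    rw [hxx, hyy, hdd] at h1
    have h2 : (fun i => v j.succ i - v 0 i) ⬝ᵥ (fun i => v j'.succ i - v 0 i) = m / 2 := by
      linarith
    rw [← h2, dotProduct]

private lemma detG' (d : ℕ) (m : ℚ) :
    (Matrix.of fun i j : Fin d => if i = j then m else m / 2).det = (m/2)^d * (d+1) := by
  have h : (Matrix.of fun i j : Fin d => if i = j then m else m / 2)
      = (m/2) • (1 + Matrix.replicateCol Unit (fun _ => (1:ℚ)) * Matrix.replicateRow Unit (fun _ => (1:ℚ))) := by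
    ext i j
    by_cases h : i = j <;>
      simp [Matrix.one_apply, h, Matrix.mul_apply] <;> ring
  rw [h, Matrix.det_smul, Matrix.det_one_add_replicateCol_mul_replicateRow]
  have h2 : (fun _ : Fin d => (1:ℚ)) ⬝ᵥ (fun _ => (1:ℚ)) = (d:ℚ) := by simp [dotProduct]
  rw [h2, Fintype.card_fin]
  ring

private lemma aff_iff' {d : ℕ} (v : Fin (d+1) → Fin d → ℚ) :
    AffineIndependent ℚ v ↔
      (Matrix.of fun i j : Fin d => v j.succ i - v 0 i).det ≠ 0 := by
  rw [affineIndependent_iff_linearIndependent_vsub ℚ v 0]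
  let E : Fin d ≃ {x : Fin (d+1) // x ≠ 0} :=
    { toFun := fun j => ⟨j.succ, Fin.succ_ne_zero j⟩
      invFun := fun x => x.1.pred x.2
      left_inv := fun j => Fin.pred_succ _
      right_inv := fun x => Subtype.ext (Fin.succ_pred x.1 x.2) }
  rw [← linearIndependent_equiv E]
  have hcomp : (fun i : {x : Fin (d+1) // x ≠ 0} => v i -ᵥ v 0) ∘ E =
      fun j : Fin d => (Matrix.of fun i j : Fin d => v j.succ i - v 0 i)ᵀ j := by
    funext j
    funext i
    simp [E, vsub_eq_sub]
  rw [hcomp, show (fun j : Fin d => (Matrix.of fun i j : Fin d => v j.succ i - v 0 i)ᵀ j) =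
      (Matrix.of fun i j : Fin d => v j.succ i - v 0 i)ᵀ.row from rfl,
    Matrix.linearIndependent_rows_iff_isUnit]
  rw [Matrix.isUnit_iff_isUnit_det, Matrix.det_transpose, isUnit_iff_ne_zero]

end Helpers

/-- For `d ≡ 3 (mod 4)` with `s` the squarefree part of `d + 1`, the squared edge
lengths of regular `d`-simplices in `ℚ^d` are exactly `2s(ℚ^×)²`. -/
theorem codim_zero_three_mod_four (d : ℕ) (hd : d % 4 = 3) (s u : ℕ)
    (hs : Squarefree s) (hsu : d + 1 = s * u ^ 2) (m : ℚ) :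
    (∃ v : Fin (d + 1) → Fin d → ℚ, IsRegularSimplex d d m v) ↔
      ∃ q : ℚ, q ≠ 0 ∧ m = 2 * s * q ^ 2 := by
  have hs0 : (s:ℚ) ≠ 0 := Nat.cast_ne_zero.mpr hs.ne_zero
  have hu0 : (u:ℚ) ≠ 0 := by
    have : u ≠ 0 := by rintro rfl; simp at hsu
    exact Nat.cast_ne_zero.mpr this
  have hd1 : ((d:ℚ)+1) = (s:ℚ) * (u:ℚ)^2 := by exact_mod_cast hsu
  constructor
  · rintro ⟨v, hAI, hdist⟩
    set X : Matrix (Fin d) (Fin d) ℚ := Matrix.of fun i j => v j.succ i - v 0 i with hX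
    have hdet : X.det ≠ 0 := (aff_iff' v).mp hAI
    have hdet2 : X.det ^ 2 = (m/2)^d * ((d:ℚ)+1) := by
      rw [← detG' d m, ← gram' hdist, Matrix.det_mul, Matrix.det_transpose, sq]
    have hm0 : m ≠ 0 := by
      rintro rfl
      rw [show ((0:ℚ)/2) = 0 by norm_num, zero_pow (by omega : d ≠ 0), zero_mul] at hdet2
      exact hdet (pow_eq_zero_iff two_ne_zero |>.mp hdet2)
    have hm2 : m/2 ≠ 0 := div_ne_zero hm0 two_ne_zero
    set t := d / 2 with ht
    have hdodd : d = 2 * t + 1 := by omega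
    refine ⟨X.det / ((m/2)^t * ((u:ℚ) * s)), ?_, ?_⟩
    · exact div_ne_zero hdet (mul_ne_zero (pow_ne_zero _ hm2) (mul_ne_zero hu0 hs0))
    · have key : X.det ^ 2 = (m/2)^(2*t+1) * ((s:ℚ) * (u:ℚ)^2) := by
        rw [← hdodd, hdet2, hd1]
      have expand : (X.det / ((m/2)^t * ((u:ℚ) * s)))^2 = (m/2)/s := by
        rw [div_pow, key]
        field_simp
        ring
      rw [expand]
      field_simp
  · rintro ⟨q, hq0, rfl⟩
    have hd4 : (d+1) % 4 = 0 := by omega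
    obtain ⟨B, hB⟩ := blockB' d hd4
    have hw : (fun _ : Fin (d+1) => (1:ℚ)) ⬝ᵥ (fun _ => (1:ℚ)) = (d:ℚ)+1 := by
      simp [dotProduct]
    obtain ⟨A, hA, hA0⟩ := reflectB' hB hw
    have hN0 : ((d:ℚ)+1) ≠ 0 := by positivity
    have hAAt : A * Aᵀ = ((d:ℚ)+1) • (1 : Matrix (Fin (d+1)) (Fin (d+1)) ℚ) := by
      ext i j
      rw [Matrix.mul_apply]
      have hh : ∑ l, A i l * Aᵀ l j = A i ⬝ᵥ A j := by
        simp [dotProduct, Matrix.transpose_apply]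
      rw [hh, hA i j]
      simp [Matrix.smul_apply, Matrix.one_apply]
    have hAtA : Aᵀ * A = ((d:ℚ)+1) • (1 : Matrix (Fin (d+1)) (Fin (d+1)) ℚ) := by
      have h1 : A * (((d:ℚ)+1)⁻¹ • Aᵀ) = 1 := by
        rw [Matrix.mul_smul, hAAt, smul_smul, inv_mul_cancel₀ hN0, one_smul]
      have h2 : (((d:ℚ)+1)⁻¹ • Aᵀ) * A = 1 := mul_eq_one_comm.mp h1
      calc Aᵀ * A = ((d:ℚ)+1) • ((((d:ℚ)+1)⁻¹ • Aᵀ) * A) := by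
            rw [Matrix.smul_mul, smul_smul, mul_inv_cancel₀ hN0, one_smul]
        _ = ((d:ℚ)+1) • 1 := by rw [h2]
    have hcol : ∀ j j', (fun i => A i j) ⬝ᵥ (fun i => A i j') =
        if j = j' then (d:ℚ)+1 else 0 := by
      intro j j'
      have hc := congrFun (congrFun hAtA j) j'
      rw [Matrix.mul_apply] at hc
      simp only [Matrix.transpose_apply, Matrix.smul_apply, Matrix.one_apply,
        smul_eq_mul] at hc
      rw [dotProduct]
      rw [hc]
      split <;> simp
    set c : Fin (d+1) → Fin d → ℚ := fun j i => (q / u) * A i.succ j with hc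
    have hdist : ∀ jj jj', jj ≠ jj' → ∑ i, (c jj i - c jj' i)^2 = 2*(s:ℚ)*q^2 := by
      intro jj jj' hne
      have hfull : ∑ i : Fin (d+1), (A i jj - A i jj')^2 = 2*((d:ℚ)+1) := by
        rw [sum_sub_sq' (fun i => A i jj) (fun i => A i jj'),
          hcol jj jj, hcol jj' jj', hcol jj jj', if_pos rfl, if_pos rfl, if_neg hne]
        ring
      have hsplit : ∑ i : Fin (d+1), (A i jj - A i jj')^2 =
          (A 0 jj - A 0 jj')^2 + ∑ i : Fin d, (A i.succ jj - A i.succ jj')^2 :=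
        Fin.sum_univ_succ _
      have hz : A 0 jj = 1 := by rw [hA0]
      have hz' : A 0 jj' = 1 := by rw [hA0]
      have hsum : ∑ i : Fin d, (A i.succ jj - A i.succ jj')^2 = 2*((d:ℚ)+1) := by
        rw [hz, hz'] at hsplit
        rw [← hfull, hsplit]
        ring
      calc ∑ i, (c jj i - c jj' i)^2
          = ∑ i : Fin d, (q/u)^2 * (A i.succ jj - A i.succ jj')^2 :=
            Finset.sum_congr rfl fun i _ => by rw [hc]; ring
        _ = (q/u)^2 * (2*((d:ℚ)+1)) := by rw [← Finset.mul_sum, hsum]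
        _ = 2*(s:ℚ)*q^2 := by rw [hd1]; field_simp
    refine ⟨c, ?_, hdist⟩
    rw [aff_iff']
    intro hdet0
    have hG := gram' hdist
    have hdetG := detG' d (2*(s:ℚ)*q^2)
    rw [← hG, Matrix.det_mul, Matrix.det_transpose, hdet0, mul_zero] at hdetG
    have hm0 : 2*(s:ℚ)*q^2 ≠ 0 := by
      apply mul_ne_zero (mul_ne_zero two_ne_zero hs0) (pow_ne_zero _ hq0)
    have : ((2*(s:ℚ)*q^2)/2)^d * ((d:ℚ)+1) ≠ 0 := by
      apply mul_ne_zero (pow_ne_zero _ (div_ne_zero hm0 two_ne_zero)) hN0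
    exact this hdetG.symm
end

section
/- If d ≡ 3 (mod 4) and n ≥ d + 1, then every positive rational m occurs as the squared edge length of a regular d-simplex with vertices in ℚⁿ. -/
def qmat (a b c e : ℚ) : ℕ → ℕ → ℚ := fun x y =>
  if x = 0 then (if y = 0 then a else if y = 1 then b else if y = 2 then c else e)
  else if x = 1 then (if y = 0 then -b else if y = 1 then a else if y = 2 then -e else c)
  else if x = 2 then (if y = 0 then -c else if y = 1 then e else if y = 2 then a else -b)
  else (if y = 0 then -e else if y = 1 then -c else if y = 2 then b else a)

lemma qmat_orth (a b c e : ℚ) (x y : ℕ) (hx : x < 4) (hy : y < 4) :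
    ∑ t ∈ Finset.range 4, qmat a b c e x t * qmat a b c e y t
      = if x = y then a^2+b^2+c^2+e^2 else 0 := by
  interval_cases x <;> interval_cases y <;>
    norm_num [qmat, Finset.sum_range_succ] <;> ring

lemma dot_lemma (d n : ℕ) (hd : d % 4 = 3) (hn : d + 1 ≤ n) (a b c e q : ℚ)
    (i j : Fin (d+1)) :
    ∑ k : Fin n, (if k.val/4 = i.val/4 then qmat a b c e (i.val%4) (k.val%4) / q else 0) *
              (if k.val/4 = j.val/4 then qmat a b c e (j.val%4) (k.val%4) / q else 0)
      = if i = j then (a^2+b^2+c^2+e^2)/q^2 else 0 := by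
  have hi := i.isLt
  have hj := j.isLt
  set F : ℕ → ℚ := fun k =>
    (if k/4 = i.val/4 then qmat a b c e (i.val%4) (k%4) / q else 0) *
      (if k/4 = j.val/4 then qmat a b c e (j.val%4) (k%4) / q else 0) with hF
  by_cases hij : i.val / 4 = j.val / 4
  · -- same block
    have h0 : (∑ k : Fin n, F k.val) = ∑ k ∈ Finset.range n, F k :=
      Fin.sum_univ_eq_sum_range F n
    have h1 : ∑ k ∈ Finset.range n, F k = ∑ k ∈ Finset.Ico (4*(i.val/4)) (4*(i.val/4)+4), F k := by
      refine (Finset.sum_subset ?_ ?_).symm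
      · intro k hk
        simp only [Finset.mem_Ico] at hk
        simp only [Finset.mem_range]
        omega
      · intro k hk hk'
        simp only [Finset.mem_range] at hk
        simp only [Finset.mem_Ico, not_and, not_lt] at hk'
        have hc : ¬ (k/4 = i.val/4) := by omega
        show (if k/4 = i.val/4 then qmat a b c e (i.val%4) (k%4) / q else 0) *
          (if k/4 = j.val/4 then qmat a b c e (j.val%4) (k%4) / q else 0) = 0
        rw [if_neg hc, zero_mul]
    have h2 : ∑ k ∈ Finset.Ico (4*(i.val/4)) (4*(i.val/4)+4), F k
        = ∑ t ∈ Finset.range 4, F (4*(i.val/4) + t) := by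
      have h4 : 4*(i.val/4)+4 - 4*(i.val/4) = 4 := by omega
      rw [Finset.sum_Ico_eq_sum_range, h4]
    have h3 : ∀ t ∈ Finset.range 4, F (4*(i.val/4) + t)
        = qmat a b c e (i.val%4) t * qmat a b c e (j.val%4) t / q^2 := by
      intro t ht
      simp only [Finset.mem_range] at ht
      have hc1 : (4*(i.val/4) + t)/4 = i.val/4 := by omega
      have hc2 : (4*(i.val/4) + t)/4 = j.val/4 := by omega
      have hc3 : (4*(i.val/4) + t) % 4 = t := by omega
      show (if (4*(i.val/4) + t)/4 = i.val/4 then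
          qmat a b c e (i.val%4) ((4*(i.val/4) + t)%4) / q else 0) *
        (if (4*(i.val/4) + t)/4 = j.val/4 then
          qmat a b c e (j.val%4) ((4*(i.val/4) + t)%4) / q else 0) = _
      rw [if_pos hc1, if_pos hc2, hc3]
      ring
    show (∑ k : Fin n, F k.val) = _
    rw [h0, h1, h2, Finset.sum_congr rfl h3, ← Finset.sum_div,
      qmat_orth a b c e _ _ (by omega) (by omega)]
    by_cases hEq : i = j
    · rw [if_pos hEq, if_pos (by rw [hEq])]
    · have hv : i.val ≠ j.val := fun h => hEq (Fin.ext h)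
      have : ¬ (i.val % 4 = j.val % 4) := by omega
      rw [if_neg hEq, if_neg this, zero_div]
  · -- different blocks
    have hne : i ≠ j := fun h => hij (by rw [h])
    rw [if_neg hne]
    apply Finset.sum_eq_zero
    intro k _
    by_cases h1 : k.val/4 = i.val/4
    · have hc : ¬ ((k:ℕ)/4 = j.val/4) := by omega
      rw [if_neg hc, mul_zero]
    · rw [if_neg h1, zero_mul]

/-- For `d ≡ 3 (mod 4)` and `n ≥ d + 1`, every positive rational occurs as a squared
edge length of a regular `d`-simplex in `ℚⁿ`. -/
theorem codim_one_three_mod_four (d n : ℕ) (hd : d % 4 = 3) (hn : d + 1 ≤ n)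
    (m : ℚ) (hm : 0 < m) :
    ∃ v : Fin (d + 1) → Fin n → ℚ, IsRegularSimplex d n m v := by
  set μ := m / 2 with hμdef
  have hμpos : 0 < μ := by rw [hμdef]; linarith
  obtain ⟨a, b, c, e, habce⟩ := Nat.sum_four_squares (μ.num.toNat * μ.den)
  set q : ℚ := (μ.den : ℚ) with hqdef
  have hq : q ≠ 0 := by
    rw [hqdef]
    exact_mod_cast μ.den_nz
  have hs : ((a:ℚ))^2 + (b:ℚ)^2 + (c:ℚ)^2 + (e:ℚ)^2 = μ * q^2 := by
    have h1 : ((a^2+b^2+c^2+e^2 : ℕ) : ℚ) = ((μ.num.toNat * μ.den : ℕ) : ℚ) := by rw [habce]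
    push_cast at h1
    have hnum : (μ.num.toNat : ℚ) = (μ.num : ℚ) := by
      have : (μ.num.toNat : ℤ) = μ.num := Int.toNat_of_nonneg (le_of_lt (Rat.num_pos.mpr hμpos))
      exact_mod_cast this
    rw [hnum] at h1
    rw [h1, hqdef]
    have hμ : ((μ.num : ℚ)) = μ * (μ.den : ℚ) := by
      have h := Rat.num_div_den μ
      rw [div_eq_iff hq] at h
      exact h
    rw [hμ]; ring
  set v : Fin (d+1) → Fin n → ℚ := fun i k =>
    if k.val/4 = i.val/4 then qmat a b c e (i.val%4) (k.val%4) / q else 0 with hv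
  have hdot : ∀ i j : Fin (d+1), (∑ k : Fin n, v i k * v j k) = if i = j then μ else 0 := by
    intro i j
    have := dot_lemma d n hd hn a b c e q i j
    rw [hv]
    rw [this]
    by_cases hEq : i = j
    · rw [if_pos hEq, if_pos hEq, hs]
      field_simp
    · rw [if_neg hEq, if_neg hEq]
  refine ⟨v, ?_, ?_⟩
  · rw [affineIndependent_iff]
    intro s w hw hsum j hj
    have key : ∑ i ∈ s, w i * (∑ k : Fin n, v i k * v j k) = 0 := by
      have hterm : ∀ i ∈ s, w i * (∑ k : Fin n, v i k * v j k)
          = ∑ k : Fin n, (w i • v i) k * v j k := by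
        intro i _
        rw [Finset.mul_sum]
        refine Finset.sum_congr rfl fun k _ => ?_
        simp [mul_assoc]
      rw [Finset.sum_congr rfl hterm, Finset.sum_comm]
      refine Finset.sum_eq_zero fun k _ => ?_
      rw [← Finset.sum_mul]
      have h := congrFun hsum k
      simp only [Finset.sum_apply, Pi.zero_apply] at h
      rw [h, zero_mul]
    simp only [hdot, mul_ite, mul_zero] at key
    rw [Finset.sum_ite_eq' s j (fun i => w i * μ), if_pos hj] at key
    exact (mul_eq_zero.mp key).resolve_right hμpos.ne'
  · intro i j hij
    have expand : ∀ k : Fin n, (v i k - v j k)^2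
        = v i k * v i k - 2*(v i k * v j k) + v j k * v j k := fun k => by ring
    calc (∑ k, (v i k - v j k)^2)
        = (∑ k, v i k * v i k) - 2*(∑ k, v i k * v j k) + (∑ k, v j k * v j k) := by
          rw [Finset.sum_congr rfl fun k _ => expand k, Finset.sum_add_distrib,
            Finset.sum_sub_distrib, Finset.mul_sum]
      _ = μ - 2*0 + μ := by rw [hdot i i, hdot i j, hdot j j]; simp [hij]
      _ = m := by rw [hμdef]; ring
end

section
/- There exists a regular 4-simplex of squared edge length 10 with vertices in ℚ⁵; explicitly, the origin together with the rows of the matrix W = [[1,3,0,0,0],[2,1,1,0,2],[2,1,−2,0,1],[5/4,5/4,−1/4,5/2,3/4]] gives 5 points of ℚ⁵ with all pairwise squared distances equal to 10. -/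
/-- The five vertices: the origin together with the rows of
`W = [[1,3,0,0,0],[2,1,1,0,2],[2,1,-2,0,1],[5/4,5/4,-1/4,5/2,3/4]]`. -/
def exVerts : Fin 5 → Fin 5 → ℚ :=
  ![![0, 0, 0, 0, 0],
    ![1, 3, 0, 0, 0],
    ![2, 1, 1, 0, 2],
    ![2, 1, -2, 0, 1],
    ![5/4, 5/4, -1/4, 5/2, 3/4]]

/-- There is a regular `4`-simplex of squared edge length `10` in `ℚ⁵`, given explicitly
by `exVerts`. -/
theorem regular_four_simplex_in_Q5 :
    AffineIndependent ℚ exVerts ∧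
      ∀ i j, i ≠ j → ∑ k, (exVerts i k - exVerts j k) ^ 2 = 10 := by
  constructor
  · rw [affineIndependent_iff]
    intro s w hsum hcomb e he
    set W : Fin 5 → ℚ := fun i => if i ∈ s then w i else 0 with hW
    have hsum' : ∑ i, W i = 0 := by
      simpa [hW, Finset.sum_ite_mem, Finset.univ_inter] using hsum
    have hcomb' : ∑ i, W i • exVerts i = 0 := by
      simpa [hW, ite_smul, Finset.sum_ite_mem, Finset.univ_inter] using hcomb
    have hWe : ∀ i, W i = 0 := by
      intro i
      have h0 := congrFun hcomb' 0
      have h1 := congrFun hcomb' 1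
      have h2 := congrFun hcomb' 2
      have h3 := congrFun hcomb' 3
      have h4 := congrFun hcomb' 4
      simp [exVerts, Fin.sum_univ_five, Finset.sum_apply] at h0 h1 h2 h3 h4 hsum'
      fin_cases i <;> simp <;> linarith
    have := hWe e
    simpa [hW, he] using this
  · intro i j hij
    fin_cases i <;> fin_cases j <;> simp_all [exVerts, Fin.sum_univ_five] <;> norm_num
end

section
/- Let d, d' ≥ 1 with d ≤ d' and suppose the squarefree parts of d+1 and d'+1 are equal. Then over ℚ there is an isometry of quadratic forms A_{d'} ≃ A_d ⊥ (d'−d)·⟨1⟩. -/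
namespace SimplexAux
open Matrix

def K (a b : ℕ) : Matrix (Fin a) (Fin b) ℚ := Matrix.of fun _ _ => 1

lemma K_mul_K (a b c : ℕ) : K a b * K b c = (b : ℚ) • K a c := by
  ext i j
  simp [K, Matrix.mul_apply, Finset.sum_const]

lemma K_transpose (a b : ℕ) : (K a b)ᵀ = K b a := rfl

lemma simplexGram_eq (n : ℕ) : simplexGram n = 1 + K n n := by
  ext i j
  by_cases h : i = j <;> simp [simplexGram, K, Matrix.one_apply, h] <;> norm_num

end SimplexAux

set_option maxHeartbeats 1000000 in
open SimplexAux Matrix in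
/-- If `sf (d+1) = sf (d'+1)` and `d ≤ d'`, then `A_{d'} ≃ A_d ⊥ (d'-d)·⟨1⟩` over `ℚ`. -/
theorem simplexGram_stable (d d' : ℕ) (hd : 1 ≤ d) (hdd' : d ≤ d')
    (hsf : ∀ s : ℕ, Squarefree s →
      ((∃ u : ℕ, d + 1 = s * u ^ 2) ↔ (∃ u : ℕ, d' + 1 = s * u ^ 2))) :
    ∃ P : Matrix (Fin d') (Fin d') ℚ, IsUnit P.det ∧
      P.transpose * simplexGram d' * P =
        Matrix.reindex (finSumFinEquiv.trans (finCongr (by omega)))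
          (finSumFinEquiv.trans (finCongr (by omega)))
          (Matrix.fromBlocks (simplexGram d) 0 0 (1 : Matrix (Fin (d' - d)) (Fin (d' - d)) ℚ)) := by
  classical
  -- Step 1: a rational r > 0 with r² (d+1) = d'+1
  obtain ⟨r, hrpos, hr⟩ : ∃ r : ℚ, 0 < r ∧ r ^ 2 * (d + 1) = (d' + 1 : ℚ) := by
    obtain ⟨a, u, ha0, hu0, hau, ha⟩ := Nat.sq_mul_squarefree_of_pos (n := d + 1) (by omega)
    obtain ⟨v, hv⟩ := (hsf a ha).mp ⟨u, by rw [← hau]; ring⟩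
    have hv0 : 0 < v := by
      rcases Nat.eq_zero_or_pos v with h | h
      · subst h; simp at hv
      · exact h
    refine ⟨(v : ℚ) / u, by positivity, ?_⟩
    have hnat : v ^ 2 * (d + 1) = u ^ 2 * (d' + 1) := by rw [← hau, hv]; ring
    have hu : (u : ℚ) ≠ 0 := by positivity
    field_simp
    have := congrArg (fun n : ℕ => (n : ℚ)) hnat
    push_cast at this ⊢
    linarith [this]
  have hr0 : r ≠ 0 := ne_of_gt hrpos
  have hd1 : ((d : ℚ) + 1) ≠ 0 := by positivity
  set m := d' - d with hmdef
  have hm : d + m = d' := by omega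
  have hmq : (m : ℚ) = (d' : ℚ) - d := by push_cast [← hm]; ring
  set s : ℚ := -1 / (r * ((d : ℚ) + 1)) with hs
  set b : ℚ := if m = 0 then 0 else (1 - r) / (r * m) with hb
  have hbm : b * m = (1 - r) / r := by
    by_cases h : m = 0
    · have hdd : (d' : ℚ) = d := by
        have := hm; rw [h] at this; simp at this; exact_mod_cast congrArg (fun n : ℕ => (n:ℚ)) this.symm
      have hr1 : r = 1 := by
        have h2 : r ^ 2 * ((d:ℚ) + 1) = (d:ℚ) + 1 := by rw [hr, hdd]
        have h0 : (r - 1) * (r + 1) = 0 := by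
          have h3 : r ^ 2 = 1 := by
            exact mul_right_cancel₀ hd1 (by rw [one_mul]; exact h2)
          linear_combination h3
        rcases mul_eq_zero.mp h0 with h' | h'
        · linarith
        · linarith
      simp [h, hb, hr1]
    · have hmne : (m : ℚ) ≠ 0 := Nat.cast_ne_zero.mpr h
      rw [hb, if_neg h]
      field_simp
  -- the block matrices
  have hbm' : b * m * r = 1 - r := by
    rw [mul_comm] at hbm
    field_simp at hbm
    linear_combination hbm
  set P₀ : Matrix (Fin d ⊕ Fin m) (Fin d ⊕ Fin m) ℚ :=
    Matrix.fromBlocks 1 (s • K d m) 0 (1 + b • K m m) with hP₀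
  set Q₀ : Matrix (Fin d ⊕ Fin m) (Fin d ⊕ Fin m) ℚ :=
    Matrix.fromBlocks 1 ((-s * r) • K d m) 0 (1 + (-b * r) • K m m) with hQ₀
  have hPQ : P₀ * Q₀ = 1 := by
    rw [hP₀, hQ₀, Matrix.fromBlocks_multiply]
    rw [← Matrix.fromBlocks_one (l := Fin d) (m := Fin m)]
    refine Matrix.fromBlocks_inj.mpr ⟨by simp, ?_, by simp, ?_⟩
    · simp only [Matrix.mul_add, Matrix.add_mul, Matrix.smul_mul, Matrix.mul_smul,
        K_mul_K, Matrix.one_mul, Matrix.mul_one, Matrix.mul_zero, Matrix.zero_mul,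
        add_zero, zero_add, smul_smul]
      ext i j
      simp only [Matrix.add_apply, Matrix.smul_apply, Matrix.zero_apply, K, Matrix.of_apply,
        smul_eq_mul, mul_one]
      linear_combination (-s) * hbm'
    · simp only [Matrix.mul_add, Matrix.add_mul, Matrix.smul_mul, Matrix.mul_smul,
        K_mul_K, Matrix.one_mul, Matrix.mul_one, add_zero, zero_add, smul_smul]
      ext i j
      simp only [Matrix.add_apply, Matrix.smul_apply, Matrix.one_apply, K, Matrix.of_apply,
        smul_eq_mul, mul_one]
      by_cases hij : i = j <;> simp [hij] <;>
        linear_combination (-b) * hbm'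
  have hs2 : s * (r * ((d:ℚ) + 1)) = -1 := by rw [hs]; field_simp
  have hkey1 : s + s * d + 1 + b * m = 0 := by
    have h3 : (s + s * d + 1 + b * m) * r = 0 := by linear_combination hs2 + hbm'
    rcases mul_eq_zero.mp h3 with h' | h'
    · exact h'
    · exact absurd h' hr0
  set e : Fin d ⊕ Fin m ≃ Fin d' := finSumFinEquiv.trans (finCongr hm) with he
  refine ⟨P₀.submatrix e.symm e.symm, ?_, ?_⟩
  · apply Matrix.isUnit_det_of_right_inverse (B := Q₀.submatrix e.symm e.symm)
    rw [Matrix.submatrix_mul_equiv, hPQ, Matrix.submatrix_one_equiv]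
  · rw [Matrix.reindex_apply]
    have hG : simplexGram d' =
        (Matrix.fromBlocks (simplexGram d) (K d m) (K m d) (simplexGram m)).submatrix
          e.symm e.symm := by
      have hblk : ∀ x y : Fin d ⊕ Fin m,
          Matrix.fromBlocks (simplexGram d) (K d m) (K m d) (simplexGram m) x y
            = if x = y then 2 else 1 := by
        rintro (x | x) (y | y) <;>
          simp [Matrix.fromBlocks, simplexGram, K, Sum.inl.injEq, Sum.inr.injEq]
      ext i j
      rw [Matrix.submatrix_apply, hblk]
      by_cases hij : i = j
      · subst hij; simp [simplexGram]
      · rw [if_neg (fun hc => hij (e.symm.injective hc))]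
        simp [simplexGram, hij]
    have key : P₀ᵀ * Matrix.fromBlocks (simplexGram d) (K d m) (K m d) (simplexGram m) * P₀
        = Matrix.fromBlocks (simplexGram d) 0 0 1 := ?_
    · rw [hG, Matrix.transpose_submatrix, Matrix.submatrix_mul_equiv,
        Matrix.submatrix_mul_equiv, key]
    have hPT : P₀ᵀ = Matrix.fromBlocks 1 0 (s • K m d) (1 + b • K m m) := by
      rw [hP₀, Matrix.fromBlocks_transpose]
      simp [K_transpose]
    rw [hPT, hP₀, simplexGram_eq d, simplexGram_eq m, Matrix.fromBlocks_multiply,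
      Matrix.fromBlocks_multiply]
    refine Matrix.fromBlocks_inj.mpr ⟨?_, ?_, ?_, ?_⟩ <;>
      simp only [Matrix.mul_add, Matrix.add_mul, Matrix.smul_mul, Matrix.mul_smul,
        K_mul_K, Matrix.one_mul, Matrix.mul_one, Matrix.mul_zero, Matrix.zero_mul,
        add_zero, zero_add, smul_smul, smul_add]
    · ext i j
      simp only [Matrix.add_apply, Matrix.smul_apply, Matrix.zero_apply, K, Matrix.of_apply,
        smul_eq_mul, mul_one]
      linear_combination hkey1
    · ext i j
      simp only [Matrix.add_apply, Matrix.smul_apply, Matrix.zero_apply, K, Matrix.of_apply,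
        smul_eq_mul, mul_one]
      linear_combination hkey1
    · ext i j
      have hm0 : m ≠ 0 := Nat.pos_iff_ne_zero.mp i.pos
      have hmne : (m : ℚ) ≠ 0 := Nat.cast_ne_zero.mpr hm0
      have hm' : (m : ℚ) = r ^ 2 * ((d : ℚ) + 1) - ((d : ℚ) + 1) := by
        rw [hmq]; linear_combination -hr
      simp only [Matrix.add_apply, Matrix.smul_apply, Matrix.one_apply, K, Matrix.of_apply,
        smul_eq_mul, mul_one]
      rw [hb, if_neg hm0, hs]
      by_cases hij : i = j <;> simp only [hij, if_true, if_false]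
      all_goals
        field_simp
        rw [hm']
        ring
end
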